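/- Fix an integer d ≥ 1, α ∈ (0, 2), a point x0 ∈ ℝ^d, and R > 0. Let φ : ℝ^d → ℝ be continuous on the unit sphere with φ(θ) > 0 for every unit vector θ, and define ν(z) = φ(z/‖z‖)·‖z‖^(−d−α) for z ∈ ℝ^d \ {0} (using the Euclidean norm and real powers). Then for every ε > 0 there exists r₀ ∈ (0, R) such that for every x with ‖x − x0‖ < r₀ and every y with ‖y − x0‖ ≥ R, one has (1 + ε)⁻¹·ν(y − x0) ≤ ν(y − x) ≤ (1 + ε)·ν(y − x0). -/

import Mathlib

open scoped Real

private lemma stable_levy_aux (ε m b a c ε' : ℝ) (hε : 0 < ε) (hc : 0 < c)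
    (hmb : m ≤ b) (hε'eq : ε' * (1 + ε) = m * ε) (hε' : 0 < ε')
    (hlow : b - ε' ≤ a) (hup : a ≤ b + ε') :
    (1 + ε)⁻¹ * (b * c) ≤ a * c ∧ a * c ≤ (1 + ε) * (b * c) := by
  have h1ε : (0 : ℝ) < 1 + ε := by linarith
  constructor
  · rw [inv_mul_le_iff₀ h1ε]
    have key : b ≤ (1 + ε) * a := by
      nlinarith [mul_le_mul_of_nonneg_left hlow (le_of_lt h1ε),
        mul_le_mul_of_nonneg_left hmb hε.le]
    nlinarith [mul_le_mul_of_nonneg_right key hc.le]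
  · have key : a ≤ (1 + ε) * b := by
      nlinarith [mul_le_mul_of_nonneg_left hmb hε.le, mul_nonneg hε'.le hε.le]
    nlinarith [mul_le_mul_of_nonneg_right key hc.le]

/-- Condition (ii) of Theorem 3.1 for strictly α-stable Lévy processes:
`C_Lévy(x0, r, R) → 1` as `r → 0⁺`. -/
theorem stable_levy_density_comparison_limit (d : ℕ) (hd : 1 ≤ d)
    (α : ℝ) (hα : α ∈ Set.Ioo (0 : ℝ) 2)
    (x0 : EuclideanSpace ℝ (Fin d)) (R : ℝ) (hR : 0 < R)
    (φ : EuclideanSpace ℝ (Fin d) → ℝ)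
    (hφc : ContinuousOn φ {θ : EuclideanSpace ℝ (Fin d) | ‖θ‖ = 1})
    (hφp : ∀ θ : EuclideanSpace ℝ (Fin d), ‖θ‖ = 1 → 0 < φ θ)
    (ν : EuclideanSpace ℝ (Fin d) → ℝ)
    (hν : ∀ z : EuclideanSpace ℝ (Fin d), z ≠ 0 →
      ν z = φ (‖z‖⁻¹ • z) * ‖z‖ ^ (-(d : ℝ) - α)) :
    ∀ ε > (0 : ℝ), ∃ r₀ ∈ Set.Ioo (0 : ℝ) R,
      ∀ x : EuclideanSpace ℝ (Fin d), ‖x - x0‖ < r₀ →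
        ∀ y : EuclideanSpace ℝ (Fin d), R ≤ ‖y - x0‖ →
          (1 + ε)⁻¹ * ν (y - x0) ≤ ν (y - x) ∧ ν (y - x) ≤ (1 + ε) * ν (y - x0) := by
  obtain ⟨hα0, hα2⟩ := hα
  intro ε hε
  have h1ε : (0:ℝ) < 1 + ε := by linarith
  set p : ℝ := -(d : ℝ) - α with hp
  set νc : EuclideanSpace ℝ (Fin d) → ℝ := fun z => φ (‖z‖⁻¹ • z) * ‖z‖ ^ p with hνcdef
  -- the sphere set
  have hSeq : {θ : EuclideanSpace ℝ (Fin d) | ‖θ‖ = 1} = Metric.sphere (0 : EuclideanSpace ℝ (Fin d)) 1 := by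
    ext z; simp [mem_sphere_zero_iff_norm]
  have hSne : ({θ : EuclideanSpace ℝ (Fin d) | ‖θ‖ = 1}).Nonempty := by
    refine ⟨EuclideanSpace.single (⟨0, hd⟩ : Fin d) (1:ℝ), ?_⟩
    show ‖EuclideanSpace.single (⟨0, hd⟩ : Fin d) (1:ℝ)‖ = 1
    rw [EuclideanSpace.norm_single]; norm_num
  have hScomp : IsCompact {θ : EuclideanSpace ℝ (Fin d) | ‖θ‖ = 1} := by
    rw [hSeq]; exact isCompact_sphere _ _
  -- minimum of φ on the sphere
  obtain ⟨θ₀, hθ₀S, hmin⟩ := hScomp.exists_isMinOn hSne hφc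
  set m : ℝ := φ θ₀ with hmdef
  have hm : 0 < m := by rw [hmdef]; exact hφp θ₀ hθ₀S
  -- direction map
  have hdirmem : ∀ z : EuclideanSpace ℝ (Fin d), z ≠ 0 → ‖(‖z‖⁻¹ • z)‖ = 1 := by
    intro z hz
    rw [norm_smul, norm_inv, norm_norm, inv_mul_cancel₀ (norm_ne_zero_iff.mpr hz)]
  have hdir : ContinuousOn (fun z : EuclideanSpace ℝ (Fin d) => ‖z‖⁻¹ • z) {z : EuclideanSpace ℝ (Fin d) | z ≠ 0} :=
    ((continuous_norm.continuousOn).inv₀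
      (fun z hz => norm_ne_zero_iff.mpr hz)).smul continuousOn_id
  have hνccont : ContinuousOn νc {z : EuclideanSpace ℝ (Fin d) | z ≠ 0} := by
    apply ContinuousOn.mul
    · exact ContinuousOn.comp (t := {θ : EuclideanSpace ℝ (Fin d) | ‖θ‖ = 1}) hφc hdir
        fun z hz => hdirmem z hz
    · exact (continuous_norm.continuousOn).rpow_const
        (fun z hz => Or.inl (norm_ne_zero_iff.mpr hz))
  -- compact set and function F
  set A : Set (EuclideanSpace ℝ (Fin d) × EuclideanSpace ℝ (Fin d)) := Metric.closedBall (0:EuclideanSpace ℝ (Fin d)) 2⁻¹ ×ˢ Metric.sphere (0:EuclideanSpace ℝ (Fin d)) 1 with hAdef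
  set F : EuclideanSpace ℝ (Fin d) × EuclideanSpace ℝ (Fin d) → ℝ := fun pr => νc (pr.2 - pr.1) with hFdef
  have hAsub : ∀ pr ∈ A, pr.2 - pr.1 ≠ 0 := by
    intro pr hpr
    obtain ⟨h1, h2⟩ := hpr
    rw [Metric.mem_closedBall, dist_zero_right] at h1
    rw [mem_sphere_zero_iff_norm] at h2
    intro h
    have := norm_sub_norm_le pr.2 pr.1
    rw [h] at this
    simp only [norm_zero] at this
    linarith
  have hFcont : ContinuousOn F A :=
    hνccont.comp ((continuous_snd.sub continuous_fst).continuousOn) hAsub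
  have hAcomp : IsCompact A := (isCompact_closedBall _ _).prod (isCompact_sphere _ _)
  have hFuc : UniformContinuousOn F A :=
    hAcomp.uniformContinuousOn_of_continuous hFcont
  set ε' : ℝ := m * ε / (1 + ε) with hε'def
  have hε' : 0 < ε' := by positivity
  have hε'eq : ε' * (1 + ε) = m * ε := by
    rw [hε'def, div_mul_cancel₀ _ h1ε.ne']
  obtain ⟨δ, hδ, hδf⟩ := Metric.uniformContinuousOn_iff.mp hFuc ε' hε'
  refine ⟨min (δ * R) R / 2, ⟨by positivity, ?_⟩, ?_⟩
  · calc min (δ * R) R / 2 ≤ R / 2 := by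
          have := min_le_right (δ * R) R; linarith
      _ < R := by linarith
  intro x hx y hy
  set u := y - x0 with hudef
  set w := x - x0 with hwdef
  have hunorm : 0 < ‖u‖ := lt_of_lt_of_le hR hy
  have hu0 : u ≠ 0 := norm_pos_iff.mp hunorm
  set θ := ‖u‖⁻¹ • u with hθdef
  set t := ‖u‖⁻¹ • w with htdef
  have hθn : ‖θ‖ = 1 := hdirmem u hu0
  have htn : ‖t‖ = ‖u‖⁻¹ * ‖w‖ := by
    rw [htdef, norm_smul, norm_inv, norm_norm]
  have htb : ‖t‖ < min (δ * R) R / 2 / R := by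
    rw [htn]
    have h1 : ‖u‖⁻¹ ≤ R⁻¹ := by
      apply inv_anti₀ hR hy
    have h2 : ‖u‖⁻¹ * ‖w‖ ≤ R⁻¹ * ‖w‖ :=
      mul_le_mul_of_nonneg_right h1 (norm_nonneg _)
    have h3 : R⁻¹ * ‖w‖ < R⁻¹ * (min (δ * R) R / 2) :=
      mul_lt_mul_of_pos_left hx (by positivity)
    calc ‖u‖⁻¹ * ‖w‖ < R⁻¹ * (min (δ * R) R / 2) := lt_of_le_of_lt h2 h3
      _ = min (δ * R) R / 2 / R := by ring
  have ht1 : ‖t‖ < δ := by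
    have : min (δ * R) R / 2 / R ≤ δ / 2 := by
      rw [div_le_div_iff₀ hR (by norm_num : (0:ℝ) < 2)]
      have := min_le_left (δ * R) R
      nlinarith
    linarith
  have ht2 : ‖t‖ ≤ 2⁻¹ := by
    have : min (δ * R) R / 2 / R ≤ 2⁻¹ := by
      rw [div_le_iff₀ hR]
      have := min_le_right (δ * R) R
      nlinarith
    linarith
  have hA1 : (t, θ) ∈ A := by
    constructor
    · rw [Metric.mem_closedBall, dist_zero_right]; exact ht2
    · rw [mem_sphere_zero_iff_norm]; exact hθn
  have hA0 : ((0:EuclideanSpace ℝ (Fin d)), θ) ∈ A := by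
    constructor
    · simp
    · rw [mem_sphere_zero_iff_norm]; exact hθn
  have hdist : dist ((t, θ) : EuclideanSpace ℝ (Fin d) × EuclideanSpace ℝ (Fin d)) (0, θ) < δ := by
    rw [Prod.dist_eq]
    simp only [dist_self, dist_zero_right]
    rw [max_eq_left (norm_nonneg t)]
    exact ht1
  have hF := hδf _ hA1 _ hA0 hdist
  -- q and v
  set q := θ - t with hqdef
  have hqn : (2:ℝ)⁻¹ ≤ ‖q‖ := by
    have := norm_sub_norm_le θ t
    rw [hθn] at this
    have : 1 - ‖t‖ ≤ ‖q‖ := this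
    linarith
  have hq0 : q ≠ 0 := by
    intro h
    rw [h, norm_zero] at hqn
    norm_num at hqn
  -- F values
  have hFq : F (t, θ) = νc q := rfl
  have hF0 : F ((0:EuclideanSpace ℝ (Fin d)), θ) = φ θ := by
    simp only [hFdef, sub_zero, hνcdef]
    rw [hθn, inv_one, one_smul, Real.one_rpow, mul_one]
  have habs : |νc q - φ θ| < ε' := by
    rw [hFq, hF0] at hF
    rwa [Real.dist_eq] at hF
  -- ν (y - x0)
  have hνu : ν (y - x0) = φ θ * ‖u‖ ^ p := by
    rw [hν u hu0, ← hθdef]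
  -- v = ‖u‖ • q
  have hvq : y - x = ‖u‖ • q := by
    have h1 : q = ‖u‖⁻¹ • (u - w) := by
      rw [hqdef, hθdef, htdef]; module
    have h2 : y - x = u - w := by rw [hudef, hwdef]; abel
    rw [h1, h2, smul_smul, mul_inv_cancel₀ (norm_ne_zero_iff.mpr hu0), one_smul]
  have hv0 : y - x ≠ 0 := by
    rw [hvq]
    exact smul_ne_zero (norm_ne_zero_iff.mpr hu0) hq0
  have hvnorm : ‖y - x‖ = ‖u‖ * ‖q‖ := by
    rw [hvq, norm_smul, Real.norm_of_nonneg (norm_nonneg u)]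
  have hνv : ν (y - x) = νc q * ‖u‖ ^ p := by
    rw [hν _ hv0]
    have hdir2 : ‖y - x‖⁻¹ • (y - x) = ‖q‖⁻¹ • q := by
      rw [hvq, norm_smul, Real.norm_of_nonneg (norm_nonneg u), smul_smul]
      congr 1
      have hun0 : ‖u‖ ≠ 0 := norm_ne_zero_iff.mpr hu0
      have hqn0 : ‖q‖ ≠ 0 := norm_ne_zero_iff.mpr hq0
      field_simp
    rw [hdir2, hvnorm, Real.mul_rpow (norm_nonneg u) (norm_nonneg q), hνcdef]
    ring
  set c : ℝ := ‖u‖ ^ p with hcdef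
  have hc : 0 < c := Real.rpow_pos_of_pos hunorm p
  have hmθ : m ≤ φ θ := isMinOn_iff.mp hmin θ hθn
  obtain ⟨habs1, habs2⟩ := abs_lt.mp habs
  have hlow : φ θ - ε' ≤ νc q := by linarith
  have hup : νc q ≤ φ θ + ε' := by linarith
  rw [hνu, hνv]
  exact stable_levy_aux ε m (φ θ) (νc q) c ε' hε hc hmθ hε'eq hε' hlow hup
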